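/- If η : ℝ → ℝ is twice differentiable and satisfies (1/2)·η''(ξ) + ξ·η'(ξ) − η(ξ) = 0 for every ξ ∈ ℝ, then η(ξ) = η(0)·(e^{−ξ²} + √π · ξ · erf(ξ)) + η'(0)·ξ for all ξ ∈ ℝ; that is, η(ξ) = A(e^{−ξ²} + √π ξ erf ξ) + Bξ with A = η(0), B = η'(0) is the general solution of this ODE. -/

import Mathlib

/-- The Gauss error function `erf x = (2/√π) ∫₀ˣ e^{-s²} ds`. -/
noncomputable def erf (x : ℝ) : ℝ :=
  (2 / Real.sqrt Real.pi) * ∫ s in (0:ℝ)..x, Real.exp (-s ^ 2)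

lemma erf_hasDerivAt (x : ℝ) :
    HasDerivAt erf (2 / Real.sqrt Real.pi * Real.exp (-x ^ 2)) x := by
  have hc : Continuous fun s : ℝ => Real.exp (-s ^ 2) := by continuity
  have h := intervalIntegral.integral_hasDerivAt_right
    (hc.intervalIntegrable 0 x) (hc.stronglyMeasurableAtFilter _ _) hc.continuousAt
  show HasDerivAt (fun y => erf y) _ x
  simpa [erf, mul_comm] using h.const_mul (2 / Real.sqrt Real.pi)

lemma erf_zero : erf 0 = 0 := by simp [erf]

theorem stmt1 (η : ℝ → ℝ)
    (hη : Differentiable ℝ η) (hη' : Differentiable ℝ (deriv η))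
    (hode : ∀ ξ : ℝ, (1 / 2) * deriv (deriv η) ξ + ξ * deriv η ξ - η ξ = 0) :
    ∀ ξ : ℝ,
      η ξ = η 0 * (Real.exp (-ξ ^ 2) + Real.sqrt Real.pi * ξ * erf ξ)
            + deriv η 0 * ξ := by
  intro ξ
  set A := η 0 with hA
  set B := deriv η 0 with hB
  set T : ℝ := |ξ| + 1 with hT
  have hT1 : (1:ℝ) ≤ T := by simp only [hT]; linarith [abs_nonneg ξ]
  have hTpos : (0:ℝ) < T := by linarith
  have hsqpi : Real.sqrt Real.pi ≠ 0 :=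
    ne_of_gt (Real.sqrt_pos.mpr Real.pi_pos)
  -- the candidate solution and its derivatives
  set u : ℝ → ℝ := fun t => Real.exp (-t ^ 2) + Real.sqrt Real.pi * t * erf t with hu
  have hu' : ∀ t : ℝ, HasDerivAt u (Real.sqrt Real.pi * erf t) t := by
    intro t
    have h1 : HasDerivAt (fun t : ℝ => Real.exp (-t ^ 2))
        (Real.exp (-t ^ 2) * (-(2 * t))) t := by
      have : HasDerivAt (fun t : ℝ => -t ^ 2) (-(2 * t)) t := by
        simpa using ((hasDerivAt_pow 2 t).fun_neg)
      exact this.exp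
    have h2 : HasDerivAt (fun t : ℝ => Real.sqrt Real.pi * t * erf t)
        (Real.sqrt Real.pi * erf t
          + (Real.sqrt Real.pi * t) * (2 / Real.sqrt Real.pi * Real.exp (-t ^ 2))) t := by
      have hlin : HasDerivAt (fun t : ℝ => Real.sqrt Real.pi * t) (Real.sqrt Real.pi) t := by
        simpa using (hasDerivAt_id t).const_mul (Real.sqrt Real.pi)
      simpa [mul_comm] using hlin.fun_mul (erf_hasDerivAt t)
    have := h1.add h2
    refine this.congr_deriv ?_
    field_simp
    ring
  -- the full candidate and its derivative
  set g : ℝ → ℝ := fun t => A * u t + B * t with hg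
  set g' : ℝ → ℝ := fun t => A * (Real.sqrt Real.pi * erf t) + B with hg'
  have hgd : ∀ t : ℝ, HasDerivAt g (g' t) t := fun t =>
    ((hu' t).const_mul A).add (by simpa using (hasDerivAt_id t).const_mul B)
  have hg'd : ∀ t : ℝ, HasDerivAt g' (A * (2 * Real.exp (-t ^ 2))) t := by
    intro t
    have := ((erf_hasDerivAt t).const_mul (Real.sqrt Real.pi)).const_mul A
    have h2 : Real.sqrt Real.pi * (2 / Real.sqrt Real.pi * Real.exp (-t ^ 2))
        = 2 * Real.exp (-t ^ 2) := by field_simp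
    rw [h2] at this
    exact this.add_const B
  -- vector field with clamped time
  set c : ℝ → ℝ := fun t => max (-T) (min T t) with hc
  set v : ℝ → ℝ × ℝ → ℝ × ℝ := fun t p => (p.2, 2 * p.1 - 2 * c t * p.2) with hv
  have hclamp : ∀ t ∈ Set.Ioo (-T) T, c t = t := by
    intro t ht
    simp only [hc]
    rw [min_eq_right ht.2.le, max_eq_right ht.1.le]
  have hcbound : ∀ t : ℝ, |c t| ≤ T := by
    intro t
    rw [abs_le]
    constructor
    · exact le_max_left _ _
    · exact max_le (by linarith) (min_le_left _ _)
  -- Lipschitz bound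
  have hlip : ∀ t : ℝ, LipschitzOnWith ⟨2 + 2 * T, by positivity⟩ (v t)
      (Set.univ : Set (ℝ × ℝ)) := by
    intro t
    refine LipschitzOnWith.of_dist_le_mul ?_
    intro p _ q _
    simp only [hv, Prod.dist_eq, Real.dist_eq]
    rw [max_le_iff]
    have hd : dist p q = max |p.1 - q.1| |p.2 - q.2| := by
      simp [Prod.dist_eq, Real.dist_eq]
    have h1 : |p.1 - q.1| ≤ dist p q := by rw [hd]; exact le_max_left _ _
    have h2 : |p.2 - q.2| ≤ dist p q := by rw [hd]; exact le_max_right _ _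
    have hdnn : 0 ≤ dist p q := dist_nonneg
    constructor
    · calc |p.2 - q.2| ≤ dist p q := h2
        _ ≤ (2 + 2 * T) * dist p q := by nlinarith
    · have : |2 * p.1 - 2 * c t * p.2 - (2 * q.1 - 2 * c t * q.2)|
          ≤ 2 * |p.1 - q.1| + 2 * |c t| * |p.2 - q.2| := by
        have : 2 * p.1 - 2 * c t * p.2 - (2 * q.1 - 2 * c t * q.2)
            = 2 * (p.1 - q.1) + (2 * c t) * -(p.2 - q.2) := by ring
        rw [this]
        have e1 : |2 * (p.1 - q.1)| = 2 * |p.1 - q.1| := by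
          rw [abs_mul]; norm_num
        have e2 : |2 * c t * -(p.2 - q.2)| = 2 * |c t| * |p.2 - q.2| := by
          rw [abs_mul, abs_neg, abs_mul]; norm_num
        calc |2 * (p.1 - q.1) + 2 * c t * -(p.2 - q.2)|
            ≤ |2 * (p.1 - q.1)| + |2 * c t * -(p.2 - q.2)| := abs_add_le _ _
          _ = 2 * |p.1 - q.1| + 2 * |c t| * |p.2 - q.2| := by rw [e1, e2]
      have hct := hcbound t
      have hctnn : (0:ℝ) ≤ |c t| := abs_nonneg _
      calc |2 * p.1 - 2 * c t * p.2 - (2 * q.1 - 2 * c t * q.2)|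
          ≤ 2 * |p.1 - q.1| + 2 * |c t| * |p.2 - q.2| := this
        _ ≤ 2 * dist p q + 2 * T * dist p q := by nlinarith
        _ = (2 + 2 * T) * dist p q := by ring
  -- the two trajectories
  set F : ℝ → ℝ × ℝ := fun t => (η t, deriv η t) with hF
  set G : ℝ → ℝ × ℝ := fun t => (g t, g' t) with hG
  have hFd : ∀ t ∈ Set.Ioo (-T) T, HasDerivAt F (v t (F t)) t := by
    intro t ht
    have h1 : HasDerivAt η (deriv η t) t := (hη t).hasDerivAt
    have h2 : HasDerivAt (deriv η) (deriv (deriv η) t) t := (hη' t).hasDerivAt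
    have hodet := hode t
    have heq : deriv (deriv η) t = 2 * η t - 2 * t * deriv η t := by linarith
    have hp := h1.prodMk h2
    rw [heq] at hp
    simp only [hv, hF, hclamp t ht]
    exact hp
  have hGd : ∀ t ∈ Set.Ioo (-T) T, HasDerivAt G (v t (G t)) t := by
    intro t ht
    have := (hgd t).prodMk (hg'd t)
    simp only [hv, hG, hclamp t ht]
    convert this using 2
    simp only [hg, hg', hu]
    ring
  have hinit : F 0 = G 0 := by
    simp only [hF, hG, hg, hg', hu, erf_zero]
    norm_num
    exact ⟨hA.symm, hB.symm⟩
  have hmem : ξ ∈ Set.Ioo (-T) T := by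
    constructor
    · have := neg_abs_le ξ; simp only [hT]; linarith
    · have := le_abs_self ξ; simp only [hT]; linarith
  have h0mem : (0:ℝ) ∈ Set.Ioo (-T) T := ⟨by linarith, hTpos⟩
  have := ODE_solution_unique_of_mem_Ioo (s := fun _ => (Set.univ : Set (ℝ × ℝ)))
    (fun t _ => hlip t) h0mem (fun t ht => ⟨hFd t ht, trivial⟩) (fun t ht => ⟨hGd t ht, trivial⟩) hinit hmem
  have hfst := congrArg Prod.fst this
  simpa [hF, hG, hg, hu] using hfst
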